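/- arXiv:1510.02521 — 9 statements merged into one kernel-verified Lean document; each statement's English description precedes it below -/
import Mathlib

section
/- If the cells of a Latin square L of order n admit a (k₁, k₂, …, k_d)-partition, i.e. a partition into sets K₁, …, K_d where each Kᵢ is a kᵢ-plex (each kᵢ ≥ 1), then χ(L) ≤ 3n − 2d. -/
open Finset

lemma greedy_coloring {V : Type*} [DecidableEq V] (G : SimpleGraph V) [DecidableRel G.Adj]
    (m : ℕ) : ∀ s : Finset V, (∀ v ∈ s, (s.filter (G.Adj v)).card < m) →
    ∃ f : V → ℕ, (∀ v ∈ s, f v < m) ∧ ∀ v ∈ s, ∀ w ∈ s, G.Adj v w → f v ≠ f w := by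
  intro s
  induction s using Finset.induction with
  | empty => intro _; exact ⟨fun _ => 0, by simp, by simp⟩
  | @insert a s ha ih =>
    intro h
    have hs : ∀ v ∈ s, (s.filter (G.Adj v)).card < m := fun v hv =>
      lt_of_le_of_lt (card_le_card (filter_subset_filter _ (subset_insert a s)))
        (h v (mem_insert_of_mem hv))
    obtain ⟨f, hf1, hf2⟩ := ih hs
    set used := (s.filter (G.Adj a)).image f with hused
    have husedcard : used.card < m := by
      calc used.card ≤ (s.filter (G.Adj a)).card := card_image_le
        _ ≤ ((insert a s).filter (G.Adj a)).card :=
            card_le_card (filter_subset_filter _ (subset_insert a s))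
        _ < m := h a (mem_insert_self a s)
    have hsub : used ⊆ Finset.range m := by
      intro x hx
      obtain ⟨y, hy, rfl⟩ := mem_image.mp hx
      exact mem_range.mpr (hf1 y (mem_filter.mp hy).1)
    obtain ⟨c, hc⟩ : (Finset.range m \ used).Nonempty := by
      rw [← Finset.card_pos, Finset.card_sdiff_of_subset hsub, card_range]
      omega
    rw [Finset.mem_sdiff, Finset.mem_range] at hc
    obtain ⟨hcm, hcu⟩ := hc
    refine ⟨Function.update f a c, ?_, ?_⟩
    · intro v hv
      rcases mem_insert.mp hv with rfl | hv
      · simpa using hcm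
      · rw [Function.update_of_ne (ne_of_mem_of_not_mem hv ha)]
        exact hf1 v hv
    · intro v hv w hw hadj
      rcases mem_insert.mp hv with hva | hv <;> rcases mem_insert.mp hw with hwa | hw
      · rw [hva, hwa] at hadj; exact absurd hadj (G.loopless.irrefl a)
      · rw [hva] at hadj ⊢
        rw [Function.update_self, Function.update_of_ne (ne_of_mem_of_not_mem hw ha)]
        intro hcq
        exact hcu (hused ▸ mem_image.mpr ⟨w, mem_filter.mpr ⟨hw, hadj⟩, hcq.symm⟩)
      · rw [hwa] at hadj ⊢
        rw [Function.update_self, Function.update_of_ne (ne_of_mem_of_not_mem hv ha)]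
        intro hcq
        exact hcu (hused ▸ mem_image.mpr ⟨v, mem_filter.mpr ⟨hv, G.symm.symm _ _ hadj⟩, hcq⟩)
      · rw [Function.update_of_ne (ne_of_mem_of_not_mem hv ha),
          Function.update_of_ne (ne_of_mem_of_not_mem hw ha)]
        exact hf2 v hv w hw hadj



/-- The Latin square graph of `L : Fin n → Fin n → Fin n`: vertices are cells, and two
distinct cells are adjacent iff they share a row, a column, or a symbol. -/
def latinGraph (n : ℕ) (L : Fin n → Fin n → Fin n) : SimpleGraph (Fin n × Fin n) where
  Adj x y := x ≠ y ∧ (x.1 = y.1 ∨ x.2 = y.2 ∨ L x.1 x.2 = L y.1 y.2)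
  symm := by
    constructor
    rintro x y ⟨hne, h⟩
    refine ⟨hne.symm, ?_⟩
    rcases h with h | h | h
    · exact Or.inl h.symm
    · exact Or.inr (Or.inl h.symm)
    · exact Or.inr (Or.inr h.symm)
  loopless := by constructor; rintro x ⟨hne, -⟩; exact hne rfl

instance latinGraphDec (n : ℕ) (L : Fin n → Fin n → Fin n) :
    DecidableRel (latinGraph n L).Adj := fun x y =>
  inferInstanceAs (Decidable (x ≠ y ∧ (x.1 = y.1 ∨ x.2 = y.2 ∨ L x.1 x.2 = L y.1 y.2)))

/-- If the cells of a Latin square `L` of order `n` admit a `(k₁, …, k_d)`-partition into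
plexes, then `χ(L) ≤ 3n - 2d`. -/
theorem stmt_4 (n d : ℕ) (L : Fin n → Fin n → Fin n)
    (hrow : ∀ r, Function.Bijective (L r))
    (hcol : ∀ c, Function.Bijective fun r => L r c)
    (k : Fin d → ℕ) (hk : ∀ i, 1 ≤ k i)
    (K : Fin d → Finset (Fin n × Fin n))
    (hcard : ∀ i, (K i).card = k i * n)
    (hKr : ∀ i, ∀ r : Fin n, ((K i).filter fun p => p.1 = r).card = k i)
    (hKc : ∀ i, ∀ c : Fin n, ((K i).filter fun p => p.2 = c).card = k i)
    (hKs : ∀ i, ∀ s : Fin n, ((K i).filter fun p => L p.1 p.2 = s).card = k i)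
    (hdisj : ∀ i j, i ≠ j → Disjoint (K i) (K j))
    (hcover : ∀ p : Fin n × Fin n, ∃ i, p ∈ K i) :
    (latinGraph n L).chromaticNumber ≤ ((3 * n - 2 * d : ℕ) : ℕ∞) := by
  classical
  rcases Nat.eq_zero_or_pos n with hn | hn
  · subst hn
    haveI : IsEmpty (Fin 0 × Fin 0) := by infer_instance
    exact (SimpleGraph.Colorable.of_isEmpty (G := latinGraph 0 L) _).chromaticNumber_le
  set G := latinGraph n L with hG
  set w : Fin d → ℕ := fun i => 3 * k i - 2 with hwdef
  set T : ℕ := ∑ i, w i with hTdef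
  have hdeg : ∀ i, ∀ p ∈ K i, ((K i).filter (G.Adj p)).card < w i := by
    intro i p hp
    set A := (K i).filter (fun q => q.1 = p.1) with hA
    set B := (K i).filter (fun q => q.2 = p.2) with hB
    set C := (K i).filter (fun q => L q.1 q.2 = L p.1 p.2) with hC
    have hpA : p ∈ A := mem_filter.mpr ⟨hp, rfl⟩
    have hpB : p ∈ B := mem_filter.mpr ⟨hp, rfl⟩
    have hpC : p ∈ C := mem_filter.mpr ⟨hp, rfl⟩
    have hsub : (K i).filter (G.Adj p) ⊆ (A.erase p ∪ B.erase p) ∪ C.erase p := by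
      intro q hq
      obtain ⟨hqK, hne, hcase⟩ : q ∈ K i ∧ p ≠ q ∧
          (p.1 = q.1 ∨ p.2 = q.2 ∨ L p.1 p.2 = L q.1 q.2) := by
        have := mem_filter.mp hq
        exact ⟨this.1, this.2.1, this.2.2⟩
      rcases hcase with h1 | h2 | h3
      · exact mem_union_left _ (mem_union_left _
          (mem_erase.mpr ⟨hne.symm, mem_filter.mpr ⟨hqK, h1.symm⟩⟩))
      · exact mem_union_left _ (mem_union_right _
          (mem_erase.mpr ⟨hne.symm, mem_filter.mpr ⟨hqK, h2.symm⟩⟩))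
      · exact mem_union_right _
          (mem_erase.mpr ⟨hne.symm, mem_filter.mpr ⟨hqK, h3.symm⟩⟩)
    have hcardle : ((K i).filter (G.Adj p)).card ≤ 3 * (k i - 1) := by
      calc ((K i).filter (G.Adj p)).card ≤ ((A.erase p ∪ B.erase p) ∪ C.erase p).card :=
            card_le_card hsub
        _ ≤ (A.erase p ∪ B.erase p).card + (C.erase p).card := card_union_le _ _
        _ ≤ (A.erase p).card + (B.erase p).card + (C.erase p).card :=
            Nat.add_le_add_right (card_union_le _ _) _
        _ = 3 * (k i - 1) := by
            rw [card_erase_of_mem hpA, card_erase_of_mem hpB, card_erase_of_mem hpC,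
              hA, hB, hC, hKr i p.1, hKc i p.2, hKs i (L p.1 p.2)]
            ring
    have hk' := hk i
    have : 3 * (k i - 1) < w i := by rw [hwdef]; dsimp only; omega
    exact hcardle.trans_lt this
  choose g hg1 hg2 using fun i => greedy_coloring G (w i) (K i) (hdeg i)
  have hι : ∀ p : Fin n × Fin n, p ∈ K ((hcover p).choose) := fun p => (hcover p).choose_spec
  set ι : Fin n × Fin n → Fin d := fun p => (hcover p).choose with hιdef
  set off : Fin d → ℕ := fun i => ∑ j ∈ Finset.Iio i, w j with hoffdef
  have hoff_step : ∀ i j : Fin d, i < j → off i + w i ≤ off j := by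
    intro i j hij
    have h1 : insert i (Finset.Iio i) = Finset.Iic i := Finset.Iio_insert i
    have h2 : Finset.Iic i ⊆ Finset.Iio j := fun l hl =>
      Finset.mem_Iio.mpr (lt_of_le_of_lt (Finset.mem_Iic.mp hl) hij)
    calc off i + w i = ∑ l ∈ insert i (Finset.Iio i), w l := by
          rw [Finset.sum_insert (by simp)]; ring
      _ = ∑ l ∈ Finset.Iic i, w l := by rw [h1]
      _ ≤ ∑ l ∈ Finset.Iio j, w l := Finset.sum_le_sum_of_subset h2
      _ = off j := rfl
  have hoff_top : ∀ i : Fin d, off i + w i ≤ T := by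
    intro i
    have h1 : insert i (Finset.Iio i) = Finset.Iic i := Finset.Iio_insert i
    calc off i + w i = ∑ l ∈ insert i (Finset.Iio i), w l := by
          rw [Finset.sum_insert (by simp)]; ring
      _ = ∑ l ∈ Finset.Iic i, w l := by rw [h1]
      _ ≤ ∑ l, w l := Finset.sum_le_sum_of_subset (Finset.subset_univ _)
  set col : Fin n × Fin n → ℕ := fun p => off (ι p) + g (ι p) p with hcoldef
  have hcolT : ∀ p, col p < T := fun p =>
    lt_of_lt_of_le (Nat.add_lt_add_left (hg1 (ι p) p (hι p)) _) (hoff_top (ι p))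
  have hkey : ∀ p q, ι p < ι q → col p ≠ col q := by
    intro p q hlt
    have h1 : col p < off (ι p) + w (ι p) := Nat.add_lt_add_left (hg1 (ι p) p (hι p)) _
    have h2 : off (ι q) ≤ col q := Nat.le_add_right _ _
    exact Nat.ne_of_lt (lt_of_lt_of_le h1 ((hoff_step _ _ hlt).trans h2))
  have hvalid : ∀ p q, G.Adj p q → col p ≠ col q := by
    intro p q hadj
    rcases lt_trichotomy (ι p) (ι q) with h | h | h
    · exact hkey p q h
    · intro hc
      have hqmem : q ∈ K (ι p) := h ▸ hι q
      have hgne := hg2 (ι p) p (hι p) q hqmem hadj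
      simp only [hcoldef, ← h] at hc
      exact hgne (Nat.add_left_cancel hc)
    · exact fun hc => hkey q p h hc.symm
  have hcolorable : G.Colorable T := by
    rcases Nat.eq_zero_or_pos T with hT0 | hTpos
    · haveI : IsEmpty (Fin n × Fin n) := by
        constructor; intro p; exact absurd (hcolT p) (by omega)
      exact SimpleGraph.Colorable.of_isEmpty (G := G) T
    · exact ⟨SimpleGraph.Coloring.mk (fun p => (⟨col p, hcolT p⟩ : Fin T))
        (fun {p q} hadj => by simpa [Fin.ext_iff] using hvalid p q hadj)⟩
  have hTeq : T = 3 * n - 2 * d := by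
    have hbU : Finset.univ.biUnion K = (Finset.univ : Finset (Fin n × Fin n)) := by
      ext p
      simp only [Finset.mem_biUnion, Finset.mem_univ, iff_true]
      obtain ⟨i, hi⟩ := hcover p
      exact ⟨i, trivial, hi⟩
    have hsumcard : ∑ i, (K i).card = n * n := by
      rw [← Finset.card_biUnion (fun i _ j _ hij => hdisj i j hij), hbU]
      simp [Finset.card_univ]
    have hksum : ∑ i, k i = n := by
      have h1 : (∑ i, k i) * n = n * n := by
        rw [Finset.sum_mul]
        simpa [hcard] using hsumcard
      exact Nat.eq_of_mul_eq_mul_right hn h1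
    rw [hTdef, hwdef]
    rw [Finset.sum_tsub_distrib _ (fun i _ => by have := hk i; omega)]
    rw [← Finset.mul_sum, hksum, Finset.sum_const, Finset.card_univ, Fintype.card_fin,
      smul_eq_mul, mul_comm d 2]
  rw [← hTeq]
  exact hcolorable.chromaticNumber_le
end

section
/- If a Latin square L of order n contains t pairwise disjoint transversals with t ≤ n − 2, then χ(L) ≤ 3n − 2t − 2. -/
theorem latinGraph_adj (n : ℕ) (L : Fin n → Fin n → Fin n) (x y : Fin n × Fin n) :
    (latinGraph n L).Adj x y ↔
      x ≠ y ∧ (x.1 = y.1 ∨ x.2 = y.2 ∨ L x.1 x.2 = L y.1 y.2) := Iff.rfl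

/-- If a Latin square of order `n` contains `t ≤ n - 2` pairwise disjoint transversals,
then `χ(L) ≤ 3n - 2t - 2`. -/
theorem stmt_5 (n t : ℕ) (ht : t ≤ n - 2) (L : Fin n → Fin n → Fin n)
    (hrow : ∀ r, Function.Bijective (L r))
    (hcol : ∀ c, Function.Bijective fun r => L r c)
    (T : Fin t → Finset (Fin n × Fin n))
    (hindep : ∀ i, ∀ p ∈ T i, ∀ q ∈ T i, ¬ (latinGraph n L).Adj p q)
    (hcard : ∀ i, (T i).card = n)
    (hdisj : ∀ i j, i ≠ j → Disjoint (T i) (T j)) :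
    (latinGraph n L).chromaticNumber ≤ ((3 * n - 2 * t - 2 : ℕ) : ℕ∞) := by
  classical
  set m : ℕ := 3 * n - 2 * t - 2 with hm
  set G := latinGraph n L with hG
  -- the union of all transversals
  set A : Finset (Fin n × Fin n) := Finset.univ.biUnion T with hA
  have hmemA : ∀ v : Fin n × Fin n, v ∈ A ↔ ∃ i, v ∈ T i := by
    intro v; simp [hA]
  -- t < m whenever there exists a vertex
  have htm : 0 < n → t < m := by intro h; omega
  -- structural facts about transversals
  have hTprop : ∀ (i : Fin t), ∀ p ∈ T i, ∀ q ∈ T i, p ≠ q →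
      p.1 ≠ q.1 ∧ p.2 ≠ q.2 ∧ L p.1 p.2 ≠ L q.1 q.2 := by
    intro i p hp q hq hne
    have h := hindep i p hp q hq
    rw [latinGraph_adj] at h
    exact ⟨fun h1 => h ⟨hne, Or.inl h1⟩, fun h2 => h ⟨hne, Or.inr (Or.inl h2)⟩,
      fun h3 => h ⟨hne, Or.inr (Or.inr h3)⟩⟩
  have hsurj : ∀ (i : Fin t) (g : Fin n × Fin n → Fin n),
      (∀ p ∈ T i, ∀ q ∈ T i, p ≠ q → g p ≠ g q) → ∀ y, ∃ p ∈ T i, g p = y := by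
    intro i g hg y
    have hinj : Set.InjOn g (T i) := by
      intro p hp q hq h
      by_contra hne
      exact hg p hp q hq hne h
    have hcardim : ((T i).image g).card = n := by
      rw [Finset.card_image_of_injOn hinj, hcard i]
    have huniv : (T i).image g = Finset.univ :=
      Finset.eq_univ_of_card _ (by rw [hcardim, Fintype.card_fin])
    have hy : y ∈ (T i).image g := huniv ▸ Finset.mem_univ y
    obtain ⟨p, hp, hgp⟩ := Finset.mem_image.mp hy
    exact ⟨p, hp, hgp⟩
  -- key degree bound
  have hkey : ∀ a : Fin n × Fin n, a ∉ A →
      ((Finset.univ.filter fun p => G.Adj a p) \ A).card + 3 * t + 3 ≤ 3 * n := by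
    intro a haA
    have hn : 0 < n := a.1.pos
    set N : Finset (Fin n × Fin n) := Finset.univ.filter fun p => G.Adj a p with hN
    -- upper bound on |N|
    have hNcard : N.card ≤ 3 * (n - 1) := by
      set σ : Fin n → Fin n := fun r' => Fintype.bijInv (hrow r') (L a.1 a.2) with hσ
      have hσs : ∀ r', L r' (σ r') = L a.1 a.2 := fun r' =>
        Fintype.rightInverse_bijInv (hrow r') _
      have hsub : N ⊆ ((Finset.univ.erase a.2).image fun c' => (a.1, c'))
          ∪ ((Finset.univ.erase a.1).image fun r' => (r', a.2))
          ∪ ((Finset.univ.erase a.1).image fun r' => (r', σ r')) := by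
        intro p hp
        rw [hN, Finset.mem_filter] at hp
        obtain ⟨-, hne, hor⟩ := hp
        have hne' : p ≠ a := hne.symm
        simp only [Finset.mem_union, Finset.mem_image, Finset.mem_erase, Finset.mem_univ,
          and_true]
        rcases hor with h1 | h2 | h3
        · exact Or.inl (Or.inl ⟨p.2, fun hc => hne' (Prod.ext_iff.mpr ⟨h1.symm, hc⟩),
            Prod.ext_iff.mpr ⟨h1, rfl⟩⟩)
        · exact Or.inl (Or.inr ⟨p.1, fun hr => hne' (Prod.ext_iff.mpr ⟨hr, h2.symm⟩),
            Prod.ext_iff.mpr ⟨rfl, h2⟩⟩)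
        · refine Or.inr ⟨p.1, ?_, ?_⟩
          · intro hr
            have he : L a.1 p.2 = L a.1 a.2 := by rw [← hr] at h3 ⊢; exact h3.symm
            exact hne' (Prod.ext_iff.mpr ⟨hr, (hrow a.1).1 he⟩)
          · have : σ p.1 = p.2 := (hrow p.1).1 (by rw [hσs p.1, h3])
            exact Prod.ext_iff.mpr ⟨rfl, this⟩
      calc N.card ≤ _ := Finset.card_le_card hsub
        _ ≤ _ := Finset.card_union_le _ _
        _ ≤ 3 * (n - 1) := by
            have h1 := Finset.card_union_le ((Finset.univ.erase a.2).image fun c' => (a.1, c'))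
              ((Finset.univ.erase a.1).image fun r' => (r', a.2))
            have e1 := Finset.card_image_le (s := Finset.univ.erase a.2)
              (f := fun c' => ((a.1, c') : Fin n × Fin n))
            have e2 := Finset.card_image_le (s := Finset.univ.erase a.1)
              (f := fun r' => ((r', a.2) : Fin n × Fin n))
            have e3 := Finset.card_image_le (s := Finset.univ.erase a.1)
              (f := fun r' => ((r', σ r') : Fin n × Fin n))
            have c1 : (Finset.univ.erase a.2).card = n - 1 := by
              rw [Finset.card_erase_of_mem (Finset.mem_univ _), Finset.card_univ,
                Fintype.card_fin]
            have c2 : (Finset.univ.erase a.1).card = n - 1 := by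
              rw [Finset.card_erase_of_mem (Finset.mem_univ _), Finset.card_univ,
                Fintype.card_fin]
            omega
    -- lower bound on |N ∩ A|
    have hNA : 3 * t ≤ (N ∩ A).card := by
      have hinter : N ∩ A = Finset.univ.biUnion fun i => N ∩ T i := by
        ext p
        simp only [Finset.mem_inter, hmemA, Finset.mem_biUnion, Finset.mem_univ, true_and]
        tauto
      rw [hinter, Finset.card_biUnion]
      · have h3 : ∀ i : Fin t, 3 ≤ (N ∩ T i).card := by
          intro i
          have haTi : a ∉ T i := fun h => haA ((hmemA a).2 ⟨i, h⟩)
          obtain ⟨pr, hpr, hpr1⟩ := hsurj i (fun p => p.1)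
            (fun p hp q hq hne => (hTprop i p hp q hq hne).1) a.1
          obtain ⟨pc, hpc, hpc2⟩ := hsurj i (fun p => p.2)
            (fun p hp q hq hne => (hTprop i p hp q hq hne).2.1) a.2
          obtain ⟨ps, hps, hps3⟩ := hsurj i (fun p => L p.1 p.2)
            (fun p hp q hq hne => (hTprop i p hp q hq hne).2.2) (L a.1 a.2)
          have hner : pr ≠ a := fun h => haTi (h ▸ hpr)
          have hnec : pc ≠ a := fun h => haTi (h ▸ hpc)
          have hnes : ps ≠ a := fun h => haTi (h ▸ hps)
          have h12 : pr ≠ pc := by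
            intro h
            exact hner (Prod.ext_iff.mpr ⟨hpr1, h ▸ hpc2⟩)
          have h13 : pr ≠ ps := by
            intro h
            have he : L pr.1 pr.2 = L a.1 a.2 := by rw [h]; exact hps3
            exact hner (Prod.ext_iff.mpr ⟨hpr1, (hrow a.1).1 (hpr1 ▸ he)⟩)
          have h23 : pc ≠ ps := by
            intro h
            have he : L pc.1 pc.2 = L a.1 a.2 := by rw [h]; exact hps3
            have he2 : L pc.1 a.2 = L a.1 a.2 := hpc2 ▸ he
            have : pc.1 = a.1 := (hcol a.2).1 (by exact he2)
            exact hnec (Prod.ext_iff.mpr ⟨this, hpc2⟩)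
          have hsubset : ({pr, pc, ps} : Finset (Fin n × Fin n)) ⊆ N ∩ T i := by
            intro p hp
            simp only [Finset.mem_insert, Finset.mem_singleton] at hp
            rw [Finset.mem_inter, hN, Finset.mem_filter]
            rcases hp with rfl | rfl | rfl
            · exact ⟨⟨Finset.mem_univ _, hner.symm, Or.inl hpr1.symm⟩, hpr⟩
            · exact ⟨⟨Finset.mem_univ _, hnec.symm, Or.inr (Or.inl hpc2.symm)⟩, hpc⟩
            · exact ⟨⟨Finset.mem_univ _, hnes.symm, Or.inr (Or.inr hps3.symm)⟩, hps⟩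
          have hc3 : ({pr, pc, ps} : Finset (Fin n × Fin n)).card = 3 := by
            rw [Finset.card_insert_of_notMem (by simp [h12, h13]),
              Finset.card_insert_of_notMem (by simp [h23]), Finset.card_singleton]
          calc 3 = _ := hc3.symm
            _ ≤ _ := Finset.card_le_card hsubset
        calc 3 * t = ∑ _i : Fin t, 3 := by simp [mul_comm]
          _ ≤ ∑ i, (N ∩ T i).card := Finset.sum_le_sum fun i _ => h3 i
      · intro i _ j _ hij
        exact (hdisj i j hij).mono inf_le_right inf_le_right
    have hsplit : (N \ A).card + (N ∩ A).card = N.card := Finset.card_sdiff_add_card_inter N A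
    omega
  -- main greedy induction
  have main : ∀ S : Finset (Fin n × Fin n), ∃ f : Fin n × Fin n → ℕ,
      (∀ i : Fin t, ∀ p ∈ T i, f p = (i : ℕ)) ∧ (∀ v, f v < m) ∧
      (∀ v ∈ S, v ∉ A → t ≤ f v) ∧
      (∀ v w, G.Adj v w → v ∈ S ∪ A → w ∈ S ∪ A → f v ≠ f w) := by
    intro S
    induction S using Finset.induction_on with
    | empty =>
      refine ⟨fun v => if h : ∃ i, v ∈ T i then (h.choose : ℕ) else 0, ?_, ?_, ?_, ?_⟩
      · intro i p hp
        have h : ∃ j, p ∈ T j := ⟨i, hp⟩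
        simp only [dif_pos h]
        have hj := h.choose_spec
        by_contra hne
        have hji : h.choose ≠ i := fun he => hne (by rw [he])
        exact Finset.disjoint_left.mp (hdisj _ _ hji) hj hp
      · intro v
        have hn : 0 < n := v.1.pos
        by_cases h : ∃ i, v ∈ T i
        · simp only [dif_pos h]
          exact lt_trans h.choose.isLt (htm hn)
        · simp only [dif_neg h]
          have := htm hn
          omega
      · intro v hv; simp at hv
      · intro v w hadj hv hw
        simp only [Finset.empty_union] at hv hw
        obtain ⟨i, hvi⟩ := (hmemA v).1 hv
        obtain ⟨j, hwj⟩ := (hmemA w).1 hw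
        have hij : i ≠ j := by
          rintro rfl
          exact hindep i v hvi w hwj hadj
        have hev : ∃ k, v ∈ T k := ⟨i, hvi⟩
        have hew : ∃ k, w ∈ T k := ⟨j, hwj⟩
        simp only [dif_pos hev, dif_pos hew]
        have h1 : hev.choose = i := by
          by_contra hne
          exact Finset.disjoint_left.mp (hdisj _ _ hne) hev.choose_spec hvi
        have h2 : hew.choose = j := by
          by_contra hne
          exact Finset.disjoint_left.mp (hdisj _ _ hne) hew.choose_spec hwj
        rw [h1, h2]
        exact fun h => hij (Fin.val_injective h)
    | @insert a S haS ih =>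
      obtain ⟨f, hf1, hf2, hf3, hf4⟩ := ih
      by_cases haA : a ∈ A
      · refine ⟨f, hf1, hf2, ?_, ?_⟩
        · intro v hv hvA
          rcases Finset.mem_insert.mp hv with rfl | hv'
          · exact absurd haA hvA
          · exact hf3 v hv' hvA
        · intro v w hadj hv hw
          refine hf4 v w hadj ?_ ?_
          · rcases Finset.mem_union.mp hv with hv' | hv'
            · rcases Finset.mem_insert.mp hv' with rfl | h
              · exact Finset.mem_union_right _ haA
              · exact Finset.mem_union_left _ h
            · exact Finset.mem_union_right _ hv'
          · rcases Finset.mem_union.mp hw with hw' | hw'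
            · rcases Finset.mem_insert.mp hw' with rfl | h
              · exact Finset.mem_union_right _ haA
              · exact Finset.mem_union_left _ h
            · exact Finset.mem_union_right _ hw'
      · -- greedy step
        have hn : 0 < n := a.1.pos
        set N : Finset (Fin n × Fin n) := Finset.univ.filter fun p => G.Adj a p with hN
        set F : Finset ℕ := Finset.range t ∪ ((N ∩ (S ∪ A)).image f) with hF
        have hFsub : F ⊆ Finset.range t ∪ ((N \ A).image f) := by
          intro x hx
          rcases Finset.mem_union.mp hx with h | h
          · exact Finset.mem_union_left _ h
          · obtain ⟨p, hp, rfl⟩ := Finset.mem_image.mp h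
            obtain ⟨hpN, hpSA⟩ := Finset.mem_inter.mp hp
            by_cases hpA : p ∈ A
            · obtain ⟨i, hpi⟩ := (hmemA p).1 hpA
              rw [hf1 i p hpi]
              exact Finset.mem_union_left _ (Finset.mem_range.mpr i.isLt)
            · exact Finset.mem_union_right _
                (Finset.mem_image.mpr ⟨p, Finset.mem_sdiff.mpr ⟨hpN, hpA⟩, rfl⟩)
        have hFcard : F.card < m := by
          have h1 : F.card ≤ t + (N \ A).card := by
            calc F.card ≤ _ := Finset.card_le_card hFsub
              _ ≤ (Finset.range t).card + ((N \ A).image f).card := Finset.card_union_le _ _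
              _ ≤ t + (N \ A).card := by
                  rw [Finset.card_range]
                  exact Nat.add_le_add_left (Finset.card_image_le) t
          have h2 := hkey a haA
          rw [← hN] at h2
          omega
        have hnonempty : (Finset.range m \ F).Nonempty := by
          by_contra hempty
          rw [Finset.not_nonempty_iff_eq_empty, Finset.sdiff_eq_empty_iff_subset] at hempty
          have := Finset.card_le_card hempty
          rw [Finset.card_range] at this
          omega
        obtain ⟨c, hc⟩ := hnonempty
        obtain ⟨hcm, hcF⟩ := Finset.mem_sdiff.mp hc
        rw [Finset.mem_range] at hcm
        refine ⟨Function.update f a c, ?_, ?_, ?_, ?_⟩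
        · intro i p hp
          have hpa : p ≠ a := fun h => haA ((hmemA a).2 ⟨i, h ▸ hp⟩)
          rw [Function.update_of_ne hpa]
          exact hf1 i p hp
        · intro v
          by_cases hva : v = a
          · rw [hva, Function.update_self]; exact hcm
          · rw [Function.update_of_ne hva]; exact hf2 v
        · intro v hv hvA
          rcases Finset.mem_insert.mp hv with rfl | hv'
          · rw [Function.update_self]
            by_contra hlt
            exact hcF (Finset.mem_union_left _ (Finset.mem_range.mpr (by omega)))
          · have hva : v ≠ a := fun h => haS (h ▸ hv')
            rw [Function.update_of_ne hva]
            exact hf3 v hv' hvA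
        · intro v w hadj hv hw
          by_cases hva : v = a
          · subst hva
            by_cases hwa : w = v
            · exact absurd (hwa ▸ hadj) (G.loopless.irrefl v)
            · rw [Function.update_self, Function.update_of_ne hwa]
              have hwSA : w ∈ S ∪ A := by
                rcases Finset.mem_union.mp hw with h | h
                · rcases Finset.mem_insert.mp h with rfl | h'
                  · exact absurd rfl hwa
                  · exact Finset.mem_union_left _ h'
                · exact Finset.mem_union_right _ h
              have hwN : w ∈ N := Finset.mem_filter.mpr ⟨Finset.mem_univ _, hadj⟩
              have : f w ∈ F := Finset.mem_union_right _
                (Finset.mem_image.mpr ⟨w, Finset.mem_inter.mpr ⟨hwN, hwSA⟩, rfl⟩)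
              exact fun h => hcF (h ▸ this)
          · by_cases hwa : w = a
            · subst hwa
              rw [Function.update_self, Function.update_of_ne hva]
              have hvSA : v ∈ S ∪ A := by
                rcases Finset.mem_union.mp hv with h | h
                · rcases Finset.mem_insert.mp h with rfl | h'
                  · exact absurd rfl hva
                  · exact Finset.mem_union_left _ h'
                · exact Finset.mem_union_right _ h
              have hvN : v ∈ N := Finset.mem_filter.mpr ⟨Finset.mem_univ _, hadj.symm⟩
              have : f v ∈ F := Finset.mem_union_right _
                (Finset.mem_image.mpr ⟨v, Finset.mem_inter.mpr ⟨hvN, hvSA⟩, rfl⟩)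
              exact fun h => hcF (h ▸ this)
            · rw [Function.update_of_ne hva, Function.update_of_ne hwa]
              refine hf4 v w hadj ?_ ?_
              · rcases Finset.mem_union.mp hv with h | h
                · rcases Finset.mem_insert.mp h with rfl | h'
                  · exact absurd rfl hva
                  · exact Finset.mem_union_left _ h'
                · exact Finset.mem_union_right _ h
              · rcases Finset.mem_union.mp hw with h | h
                · rcases Finset.mem_insert.mp h with rfl | h'
                  · exact absurd rfl hwa
                  · exact Finset.mem_union_left _ h'
                · exact Finset.mem_union_right _ h
  obtain ⟨f, -, hf2, -, hf4⟩ := main Finset.univ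
  have hcolorable : G.Colorable m := by
    rw [SimpleGraph.colorable_iff_exists_bdd_nat_coloring]
    refine ⟨SimpleGraph.Coloring.mk f ?_, hf2⟩
    intro v w hadj
    exact hf4 v w hadj (Finset.mem_union_left _ (Finset.mem_univ _))
      (Finset.mem_union_left _ (Finset.mem_univ _))
  exact hcolorable.chromaticNumber_le
end

section
/- If a Latin square L of order n (with n ≥ 1) contains n − 1 pairwise disjoint transversals, then χ(L) = n. -/
/-- Generic counting lemma: if a fiber of `f` has exactly `n` elements, each of the `n-1`
disjoint transversals contributes a point to it, and `p, q` are in the fiber but in no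
transversal, then `p = q` (else the fiber would have `≥ n+1` elements). -/
lemma fiber_aux (n : ℕ) (T : Fin (n - 1) → Finset (Fin n × Fin n))
    (hdisj : ∀ i j, i ≠ j → Disjoint (T i) (T j))
    (f : Fin n × Fin n → Fin n) (v : Fin n)
    (hfib : (Finset.univ.filter fun p => f p = v).card = n)
    (w : Fin (n - 1) → Fin n × Fin n) (hw : ∀ i, w i ∈ T i) (hwv : ∀ i, f (w i) = v)
    (p q : Fin n × Fin n) (hp : ∀ i, p ∉ T i) (hq : ∀ i, q ∉ T i)
    (hfp : f p = v) (hfq : f q = v) (hne : p ≠ q) : False := by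
  have hwinj : Function.Injective w := by
    intro i j hij
    by_contra hij'
    exact Finset.disjoint_left.mp (hdisj i j hij') (hw i) (hij ▸ hw j)
  have hpw : p ∉ Finset.univ.image w := by
    simp only [Finset.mem_image, Finset.mem_univ, true_and]
    rintro ⟨i, rfl⟩; exact hp i (hw i)
  have hqw : q ∉ Finset.univ.image w := by
    simp only [Finset.mem_image, Finset.mem_univ, true_and]
    rintro ⟨i, rfl⟩; exact hq i (hw i)
  have hsub : insert p (insert q (Finset.univ.image w)) ⊆
      Finset.univ.filter fun x => f x = v := by
    intro x hx
    simp only [Finset.mem_insert, Finset.mem_image, Finset.mem_univ, true_and] at hx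
    rcases hx with rfl | rfl | ⟨i, rfl⟩ <;>
      simp [hfp, hfq, hwv, Finset.mem_filter]
  have hcardins : (insert p (insert q (Finset.univ.image w))).card = n + 1 := by
    rw [Finset.card_insert_of_notMem (by simp [hpw, hne]),
      Finset.card_insert_of_notMem hqw,
      Finset.card_image_of_injective _ hwinj, Finset.card_univ, Fintype.card_fin]
    omega
  have := Finset.card_le_card hsub
  rw [hcardins, hfib] at this
  omega

/-- If a Latin square of order `n ≥ 1` contains `n - 1` pairwise disjoint transversals,
then `χ(L) = n`. -/
theorem stmt_6 (n : ℕ) (hn : 1 ≤ n) (L : Fin n → Fin n → Fin n)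
    (hrow : ∀ r, Function.Bijective (L r))
    (hcol : ∀ c, Function.Bijective fun r => L r c)
    (T : Fin (n - 1) → Finset (Fin n × Fin n))
    (hindep : ∀ i, ∀ p ∈ T i, ∀ q ∈ T i, ¬ (latinGraph n L).Adj p q)
    (hcard : ∀ i, (T i).card = n)
    (hdisj : ∀ i j, i ≠ j → Disjoint (T i) (T j)) :
    (latinGraph n L).chromaticNumber = (n : ℕ∞) := by
  classical
  -- distinct cells in the same transversal are equal whenever they share row/col/symbol
  have key : ∀ i, ∀ p ∈ T i, ∀ q ∈ T i,
      (p.1 = q.1 ∨ p.2 = q.2 ∨ L p.1 p.2 = L q.1 q.2) → p = q := by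
    intro i p hp q hq h
    by_contra hne
    exact hindep i p hp q hq ⟨hne, h⟩
  -- for each "line function" f and each value v, every transversal meets the fiber
  have witness : ∀ (f : Fin n × Fin n → Fin n),
      (∀ i, ∀ p ∈ T i, ∀ q ∈ T i, f p = f q → p = q) →
      ∀ (i : Fin (n-1)) (v : Fin n), ∃ p ∈ T i, f p = v := by
    intro f hf i v
    have hinj : Set.InjOn f (T i) := fun p hp q hq h => hf i p hp q hq h
    have himg : ((T i).image f).card = n := by
      rw [Finset.card_image_of_injOn hinj, hcard]
    have : (T i).image f = Finset.univ :=
      Finset.eq_univ_of_card _ (by simpa using himg)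
    have hv : v ∈ (T i).image f := this ▸ Finset.mem_univ v
    simpa using Finset.mem_image.mp hv
  -- fiber cardinalities
  have fibrow : ∀ r : Fin n, (Finset.univ.filter fun p : Fin n × Fin n => p.1 = r).card = n := by
    intro r
    have : (Finset.univ.filter fun p : Fin n × Fin n => p.1 = r) =
        Finset.univ.image fun c : Fin n => (r, c) := by
      ext ⟨a, b⟩
      simp only [Finset.mem_filter, Finset.mem_univ, true_and, Finset.mem_image, Prod.mk.injEq]
      constructor
      · rintro rfl; exact ⟨b, rfl, rfl⟩
      · rintro ⟨c, rfl, rfl⟩; rfl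
    rw [this, Finset.card_image_of_injective _ (fun a b h => (Prod.mk.injEq _ _ _ _ ▸ h).2),
      Finset.card_univ, Fintype.card_fin]
  have fibcol : ∀ c : Fin n, (Finset.univ.filter fun p : Fin n × Fin n => p.2 = c).card = n := by
    intro c
    have : (Finset.univ.filter fun p : Fin n × Fin n => p.2 = c) =
        Finset.univ.image fun r : Fin n => (r, c) := by
      ext ⟨a, b⟩
      simp only [Finset.mem_filter, Finset.mem_univ, true_and, Finset.mem_image, Prod.mk.injEq]
      constructor
      · rintro rfl; exact ⟨a, rfl, rfl⟩
      · rintro ⟨r, rfl, rfl⟩; rfl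
    rw [this, Finset.card_image_of_injective _ (fun a b h => (Prod.mk.injEq _ _ _ _ ▸ h).1),
      Finset.card_univ, Fintype.card_fin]
  have fibsym : ∀ v : Fin n,
      (Finset.univ.filter fun p : Fin n × Fin n => L p.1 p.2 = v).card = n := by
    intro v
    set e : Fin n → Fin n := fun r => (Equiv.ofBijective _ (hrow r)).symm v with he
    have hLe : ∀ r, L r (e r) = v := fun r => (Equiv.ofBijective _ (hrow r)).apply_symm_apply v
    have : (Finset.univ.filter fun p : Fin n × Fin n => L p.1 p.2 = v) =
        Finset.univ.image fun r : Fin n => (r, e r) := by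
      ext ⟨a, b⟩
      simp only [Finset.mem_filter, Finset.mem_univ, true_and, Finset.mem_image, Prod.mk.injEq]
      constructor
      · intro h
        exact ⟨a, rfl, (hrow a).1 (by rw [hLe a, h])⟩
      · rintro ⟨r, rfl, rfl⟩; exact hLe _
    rw [this, Finset.card_image_of_injective _ (fun a b h => (Prod.mk.injEq _ _ _ _ ▸ h).1),
      Finset.card_univ, Fintype.card_fin]
  -- the leftover cells form an independent set
  have leftover : ∀ p q : Fin n × Fin n, (∀ i, p ∉ T i) → (∀ i, q ∉ T i) →
      (latinGraph n L).Adj p q → False := by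
    intro p q hp hq ⟨hne, hadj⟩
    rcases hadj with h | h | h
    · have hf : ∀ i, ∀ a ∈ T i, ∀ b ∈ T i, a.1 = b.1 → a = b :=
        fun i a ha b hb hab => key i a ha b hb (Or.inl hab)
      choose w hw hwv using fun i => witness _ hf i q.1
      exact fiber_aux n T hdisj Prod.fst q.1 (fibrow q.1) w hw hwv p q hp hq h rfl hne
    · have hf : ∀ i, ∀ a ∈ T i, ∀ b ∈ T i, a.2 = b.2 → a = b :=
        fun i a ha b hb hab => key i a ha b hb (Or.inr (Or.inl hab))
      choose w hw hwv using fun i => witness _ hf i q.2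
      exact fiber_aux n T hdisj Prod.snd q.2 (fibcol q.2) w hw hwv p q hp hq h rfl hne
    · have hf : ∀ i, ∀ a ∈ T i, ∀ b ∈ T i, L a.1 a.2 = L b.1 b.2 → a = b :=
        fun i a ha b hb hab => key i a ha b hb (Or.inr (Or.inr hab))
      choose w hw hwv using fun i => witness _ hf i (L q.1 q.2)
      exact fiber_aux n T hdisj (fun p => L p.1 p.2) (L q.1 q.2) (fibsym (L q.1 q.2))
        w hw hwv p q hp hq h rfl hne
  -- the coloring
  have hlast : n - 1 < n := by omega
  let C : Fin n × Fin n → Fin n := fun p =>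
    if h : ∃ i, p ∈ T i then Fin.castLE (Nat.sub_le n 1) h.choose else ⟨n - 1, hlast⟩
  have hC : ∀ p q, (latinGraph n L).Adj p q → C p ≠ C q := by
    intro p q hadj
    by_cases hp : ∃ i, p ∈ T i <;> by_cases hq : ∃ i, q ∈ T i
    · simp only [C, dif_pos hp, dif_pos hq]
      intro h
      have hij : hp.choose = hq.choose := Fin.castLE_injective _ h
      exact hindep hq.choose p (hij ▸ hp.choose_spec) q hq.choose_spec hadj
    · simp only [C, dif_pos hp, dif_neg hq]
      intro h
      have : (hp.choose : ℕ) = n - 1 := congrArg Fin.val h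
      have := hp.choose.isLt
      omega
    · simp only [C, dif_neg hp, dif_pos hq]
      intro h
      have : n - 1 = (hq.choose : ℕ) := congrArg Fin.val h
      have := hq.choose.isLt
      omega
    · exact absurd hadj (fun h => leftover p q (not_exists.mp hp) (not_exists.mp hq) h)
  have upper : (latinGraph n L).chromaticNumber ≤ (n : ℕ∞) := by
    simpa using (SimpleGraph.Coloring.mk C (fun {p q} h => hC p q h)).colorable.chromaticNumber_le
  -- lower bound: a row is a clique of size n
  have hclique : (latinGraph n L).IsClique
      ((Finset.univ.image fun c : Fin n => ((⟨0, hn⟩ : Fin n), c)) : Finset (Fin n × Fin n)) := by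
    intro a ha b hb hab
    simp only [Finset.coe_image, Set.mem_image, Finset.coe_univ, Set.mem_univ, true_and] at ha hb
    obtain ⟨c, rfl⟩ := ha
    obtain ⟨d, rfl⟩ := hb
    exact ⟨hab, Or.inl rfl⟩
  have lower := hclique.card_le_chromaticNumber
  rw [Finset.card_image_of_injective _ (fun a b h => (Prod.mk.injEq _ _ _ _ ▸ h).2),
    Finset.card_univ, Fintype.card_fin] at lower
  exact le_antisymm upper lower
end

section
/- If L is a row-complete Latin square of order n, then χ(L) ≤ 2n. -/
/-- If `L` is a row-complete Latin square of order `n`, then `χ(L) ≤ 2n`. -/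
theorem stmt_7 (n : ℕ) (L : Fin n → Fin n → Fin n)
    (hrow : ∀ r, Function.Bijective (L r))
    (hcol : ∀ c, Function.Bijective fun r => L r c)
    (hrc : ∀ (i i' : Fin n) (j j' : ℕ) (hj : j + 1 < n) (hj' : j' + 1 < n),
      L i ⟨j, Nat.lt_of_succ_lt hj⟩ = L i' ⟨j', Nat.lt_of_succ_lt hj'⟩ →
      L i ⟨j + 1, hj⟩ = L i' ⟨j' + 1, hj'⟩ →
      i = i' ∧ j = j') :
    (latinGraph n L).chromaticNumber ≤ ((2 * n : ℕ) : ℕ∞) := by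
  have hcolor : (latinGraph n L).Colorable (2 * n) := by
    refine ⟨⟨fun x => if h : (x.2 : ℕ) + 1 < n
        then Fin.castLE (by omega) (L x.1 ⟨(x.2 : ℕ) + 1, h⟩)
        else ⟨n + x.1, by have := x.1.2; have := x.2.2; omega⟩, ?_⟩⟩
    rintro ⟨i, j⟩ ⟨i', j'⟩ ⟨hne, hadj⟩ heq
    simp only at heq
    replace hadj : i = i' ∨ j = j' ∨ L i j = L i' j' := hadj
    by_cases h1 : (j : ℕ) + 1 < n <;> by_cases h2 : (j' : ℕ) + 1 < n
    · rw [dif_pos h1, dif_pos h2] at heq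
      have hL : L i ⟨(j : ℕ) + 1, h1⟩ = L i' ⟨(j' : ℕ) + 1, h2⟩ := by
        have hv := congrArg Fin.val heq
        simp only [Fin.coe_castLE] at hv
        exact Fin.ext hv
      apply hne
      rcases hadj with h | h | h
      · subst h
        have h3 := (hrow i).1 hL
        have h4 : (j : ℕ) = (j' : ℕ) := by
          have := congrArg Fin.val h3
          simpa using this
        exact Prod.ext rfl (Fin.ext h4)
      · subst h
        have := (hcol ⟨(j : ℕ) + 1, h1⟩).1 hL
        exact Prod.ext this rfl
      · have hsym : L i ⟨(j : ℕ), Nat.lt_of_succ_lt h1⟩ = L i' ⟨(j' : ℕ), Nat.lt_of_succ_lt h2⟩ := by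
          convert h using 2
        obtain ⟨hi, hj⟩ := hrc i i' j j' h1 h2 hsym hL
        exact Prod.ext hi (Fin.ext hj)
    · rw [dif_pos h1, dif_neg h2] at heq
      have := congrArg Fin.val heq
      simp only [Fin.coe_castLE] at this
      have := (L i ⟨(j : ℕ) + 1, h1⟩).2
      omega
    · rw [dif_neg h1, dif_pos h2] at heq
      have := congrArg Fin.val heq
      simp only [Fin.coe_castLE] at this
      have := (L i' ⟨(j' : ℕ) + 1, h2⟩).2
      omega
    · rw [dif_neg h1, dif_neg h2] at heq
      simp only [Fin.mk.injEq] at heq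
      have : (i : ℕ) = (i' : ℕ) := by omega
      have hj : (j : ℕ) = (j' : ℕ) := by have := j.2; have := j'.2; omega
      exact hne (Prod.ext (Fin.ext this) (Fin.ext hj))
  exact hcolor.chromaticNumber_le
end

section
/- For every finite group G of odd order n, the Cayley table of G satisfies χ(L_G) = n. -/
/-- The Latin square graph of the Cayley table of a group `G`: vertices are cells `(g, h)`,
and two distinct cells are adjacent iff they share a row, a column, or a symbol `g * h`. -/
def cayleyGraph (G : Type*) [Group G] : SimpleGraph (G × G) where
  Adj x y := x ≠ y ∧ (x.1 = y.1 ∨ x.2 = y.2 ∨ x.1 * x.2 = y.1 * y.2)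
  symm := by
    constructor
    rintro x y ⟨hne, h⟩
    refine ⟨hne.symm, ?_⟩
    rcases h with h | h | h
    · exact Or.inl h.symm
    · exact Or.inr (Or.inl h.symm)
    · exact Or.inr (Or.inr h.symm)
  loopless := by constructor; rintro x ⟨hne, -⟩; exact hne rfl

/-- For every finite group `G` of odd order `n`, the Cayley table satisfies `χ(L_G) = n`. -/
theorem stmt_10 (G : Type) [Group G] [Fintype G] (hodd : Odd (Fintype.card G)) :
    (cayleyGraph G).chromaticNumber = (Fintype.card G : ℕ∞) := by
  have hcop : (Nat.card G).Coprime 2 := by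
    refine (Nat.coprime_comm.mp ((Nat.prime_two.coprime_iff_not_dvd).mpr ?_))
    rw [Nat.card_eq_fintype_card]
    exact (Nat.not_even_iff_odd.mpr hodd) ∘ (even_iff_two_dvd).mpr
  have hsq : Function.Injective (fun x : G => x * x) := by
    intro a b hab
    have : powCoprime hcop a = powCoprime hcop b := by
      simpa [powCoprime_apply, pow_two] using hab
    exact (powCoprime hcop).injective this
  -- upper bound: explicit coloring
  have C : (cayleyGraph G).Coloring G := by
    refine SimpleGraph.Coloring.mk (fun x => x.1 * x.2 * x.2) ?_
    rintro ⟨g, h⟩ ⟨g', h'⟩ ⟨hne, hadj⟩ hc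
    dsimp at hc
    rcases hadj with rfl' | rfl' | heq
    · dsimp at rfl'; subst rfl'
      have hc' : g * (h * h) = g * (h' * h') := by rw [← mul_assoc, ← mul_assoc]; exact hc
      have : h = h' := hsq (mul_left_cancel hc')
      exact hne (by simp [this])
    · dsimp at rfl'; subst rfl'
      have : g = g' := mul_right_cancel (mul_right_cancel hc)
      exact hne (by simp [this])
    · dsimp at heq
      have hh : h = h' := by
        have hc2 := hc
        rw [heq] at hc2
        exact mul_left_cancel hc2
      subst hh
      have : g = g' := mul_right_cancel heq
      exact hne (by simp [this])
  have hub : (cayleyGraph G).chromaticNumber ≤ (Fintype.card G : ℕ∞) :=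
    C.colorable.chromaticNumber_le
  -- lower bound: a row is a clique, via embedding of the complete graph
  have emb : (⊤ : SimpleGraph G) ↪g cayleyGraph G := by
    refine ⟨⟨fun h => (1, h), fun a b hab => (Prod.mk.injEq _ _ _ _).mp hab |>.2⟩, ?_⟩
    intro a b
    constructor
    · rintro ⟨hne, -⟩
      exact fun hab => hne (by simp [hab])
    · rintro hne
      exact ⟨by simp [hne.ne], Or.inl rfl⟩
  have hlb : (Fintype.card G : ℕ∞) ≤ (cayleyGraph G).chromaticNumber := by
    have := SimpleGraph.chromaticNumber_mono_of_hom emb.toHom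
    rwa [SimpleGraph.chromaticNumber_top] at this
  exact le_antisymm hub hlb
end

section
/- For every finite group G of order n, either χ(L_G) = n or χ(L_G) ≥ n + 2; that is, χ(L_G) ≠ n + 1. -/
/-- From an injective map `σ` with `g ↦ g * σ g` also injective (a "complete mapping"),
we get a proper coloring of the Cayley graph with color set `G`. -/
lemma cayley_colorable_of_complete_mapping (G : Type) [Group G] [Fintype G]
    (σ : G → G) (h1 : Function.Injective σ)
    (h2 : Function.Injective fun g => g * σ g) :
    (cayleyGraph G).Colorable (Fintype.card G) := by
  have C : (cayleyGraph G).Coloring G := by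
    refine SimpleGraph.Coloring.mk (fun x => (σ x.1)⁻¹ * x.2) ?_
    rintro x y ⟨hne, hcase⟩ heq'
    have heq : (σ x.1)⁻¹ * x.2 = (σ y.1)⁻¹ * y.2 := heq'
    have hx2 : x.2 = σ x.1 * ((σ x.1)⁻¹ * x.2) := by group
    have hy2 : y.2 = σ y.1 * ((σ y.1)⁻¹ * y.2) := by group
    rcases hcase with h | h | h
    · apply hne
      have : x.2 = y.2 := by rw [hx2, hy2, heq, h]
      exact Prod.ext h this
    · have hσ : σ x.1 = σ y.1 := by
        have := heq
        rw [h] at this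
        exact inv_injective (mul_right_cancel this)
      have h1' : x.1 = y.1 := h1 hσ
      exact hne (Prod.ext h1' h)
    · have hmul : (x.1 * σ x.1) * ((σ x.1)⁻¹ * x.2) =
          (y.1 * σ y.1) * ((σ y.1)⁻¹ * y.2) := by
        have : x.1 * x.2 = y.1 * y.2 := h
        calc (x.1 * σ x.1) * ((σ x.1)⁻¹ * x.2) = x.1 * x.2 := by group
          _ = y.1 * y.2 := h
          _ = (y.1 * σ y.1) * ((σ y.1)⁻¹ * y.2) := by group
      rw [heq] at hmul
      have := mul_right_cancel hmul
      have h1' : x.1 = y.1 := h2 this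
      have h2' : x.2 = y.2 := by rw [hx2, hy2, heq, h1']
      exact hne (Prod.ext h1' h2')
  exact C.colorable

/-- A proper `(n+1)`-coloring of the Cayley graph yields a transversal, hence an `n`-coloring. -/
lemma cayley_colorable_card (G : Type) [Group G] [Fintype G]
    (h : (cayleyGraph G).Colorable (Fintype.card G + 1)) :
    (cayleyGraph G).Colorable (Fintype.card G) := by
  classical
  obtain ⟨C⟩ := h
  set n := Fintype.card G with hn
  have hn1 : 1 ≤ n := Fintype.card_pos
  -- some color class has at least n cells
  have hsum : (Finset.univ : Finset (G × G)).card =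
      ∑ i : Fin (n + 1), (Finset.univ.filter fun x : G × G => C x = i).card :=
    Finset.card_eq_sum_card_fiberwise (fun x _ => Finset.mem_univ (C x))
  have hcardprod : (Finset.univ : Finset (G × G)).card = n * n := by
    simp [Finset.card_univ, Fintype.card_prod, hn]
  have hex : ∃ i : Fin (n + 1),
      n ≤ (Finset.univ.filter fun x : G × G => C x = i).card := by
    by_contra hc
    push_neg at hc
    have hle : ∑ i : Fin (n + 1), (Finset.univ.filter fun x : G × G => C x = i).card
        ≤ ∑ _i : Fin (n + 1), (n - 1) := by
      refine Finset.sum_le_sum fun i _ => ?_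
      have := hc i
      omega
    have hnn : n * n ≤ (n + 1) * (n - 1) := by
      rw [← hcardprod, hsum]
      simpa [Finset.sum_const, Finset.card_univ, mul_comm] using hle
    obtain ⟨m, hm⟩ : ∃ m, n = m + 1 := ⟨n - 1, by omega⟩
    rw [hm] at hnn
    simp only [Nat.add_sub_cancel] at hnn
    nlinarith [hnn]
  obtain ⟨i, hi⟩ := hex
  set S := Finset.univ.filter fun x : G × G => C x = i with hS
  -- nonadjacency within S
  have hnadj : ∀ x ∈ S, ∀ y ∈ S, ¬ (cayleyGraph G).Adj x y := by
    intro x hx y hy hadj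
    have hx' : C x = i := (Finset.mem_filter.1 hx).2
    have hy' : C y = i := (Finset.mem_filter.1 hy).2
    exact C.valid hadj (hx'.trans hy'.symm)
  have hfst : Set.InjOn Prod.fst (S : Set (G × G)) := by
    intro x hx y hy hxy
    by_contra hne
    exact hnadj x hx y hy ⟨hne, Or.inl hxy⟩
  have hsnd : Set.InjOn Prod.snd (S : Set (G × G)) := by
    intro x hx y hy hxy
    by_contra hne
    exact hnadj x hx y hy ⟨hne, Or.inr (Or.inl hxy)⟩
  have hmul : Set.InjOn (fun x : G × G => x.1 * x.2) (S : Set (G × G)) := by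
    intro x hx y hy hxy
    by_contra hne
    exact hnadj x hx y hy ⟨hne, Or.inr (Or.inr hxy)⟩
  -- S has exactly n cells, and fst : S → G is surjective
  have hcardle : S.card ≤ n := by
    have := Finset.card_le_card_of_injOn Prod.fst (fun x _ => Finset.mem_univ x.1) hfst
    simpa [Finset.card_univ] using this
  have hScard : S.card = n := le_antisymm hcardle hi
  have himg : S.image Prod.fst = Finset.univ := by
    apply Finset.eq_univ_of_card
    rw [Finset.card_image_of_injOn hfst, hScard]
  have hsurj : ∀ g : G, ∃ x : G × G, x ∈ S ∧ x.1 = g := by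
    intro g
    have : g ∈ S.image Prod.fst := by rw [himg]; exact Finset.mem_univ g
    obtain ⟨x, hx, hx1⟩ := Finset.mem_image.1 this
    exact ⟨x, hx, hx1⟩
  choose f hfS hf1 using hsurj
  have hfeq : ∀ a b : G, f a = f b → a = b := by
    intro a b hab
    rw [← hf1 a, ← hf1 b, hab]
  refine cayley_colorable_of_complete_mapping G (fun g => (f g).2) ?_ ?_
  · intro a b hab
    exact hfeq a b (hsnd (hfS a) (hfS b) hab)
  · intro a b hab
    have : (f a).1 * (f a).2 = (f b).1 * (f b).2 := by
      simpa [hf1] using hab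
    exact hfeq a b (hmul (hfS a) (hfS b) this)

/-- For every finite group `G` of order `n`, either `χ(L_G) = n` or `χ(L_G) ≥ n + 2`. -/
theorem stmt_11 (G : Type) [Group G] [Fintype G] :
    (cayleyGraph G).chromaticNumber = (Fintype.card G : ℕ∞) ∨
      (Fintype.card G : ℕ∞) + 2 ≤ (cayleyGraph G).chromaticNumber := by
  classical
  set n := Fintype.card G with hn
  -- lower bound from a clique (a row of the Latin square)
  have hclique : (cayleyGraph G).IsClique
      ((Finset.univ.image fun h : G => ((1 : G), h) : Finset (G × G)) : Set (G × G)) := by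
    intro x hx y hy hne
    simp only [Finset.coe_image, Set.mem_image] at hx hy
    obtain ⟨a, -, rfl⟩ := hx
    obtain ⟨b, -, rfl⟩ := hy
    exact ⟨hne, Or.inl rfl⟩
  have hcliquecard : (Finset.univ.image fun h : G => ((1 : G), h)).card = n := by
    rw [Finset.card_image_of_injective _ (fun a b hab => (Prod.mk.injEq _ _ _ _ ▸ hab).2),
      Finset.card_univ]
  have hlow : (n : ℕ∞) ≤ (cayleyGraph G).chromaticNumber := by
    have := hclique.card_le_chromaticNumber
    rwa [hcliquecard] at this
  by_cases hcol : (cayleyGraph G).Colorable (n + 1)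
  · left
    have hup : (cayleyGraph G).chromaticNumber ≤ (n : ℕ∞) :=
      SimpleGraph.chromaticNumber_le_iff_colorable.2 (cayley_colorable_card G hcol)
    exact le_antisymm hup hlow
  · right
    have : ¬ (cayleyGraph G).chromaticNumber ≤ ((n + 1 : ℕ) : ℕ∞) := by
      intro hle
      exact hcol (SimpleGraph.chromaticNumber_le_iff_colorable.1 hle)
    have hlt : ((n + 1 : ℕ) : ℕ∞) < (cayleyGraph G).chromaticNumber := lt_of_not_ge this
    have h2 : ((n + 2 : ℕ) : ℕ∞) ≤ (cayleyGraph G).chromaticNumber := by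
      have := Order.add_one_le_of_lt hlt
      exact le_trans (le_of_eq (by push_cast; rw [add_assoc, one_add_one_eq_two])) this
    calc (n : ℕ∞) + 2 = ((n + 2 : ℕ) : ℕ∞) := by push_cast; ring
      _ ≤ _ := h2
end

section
/- For every odd n ≥ 1, the circulant Latin square of order n satisfies χ(L_{Z_n}) = n. -/
/-- The Latin square graph of the circulant Latin square of order `n` (the Cayley table of
`ZMod n`, with symbol `r + c` in cell `(r, c)`). -/
def circGraph (n : ℕ) : SimpleGraph (ZMod n × ZMod n) where
  Adj x y := x ≠ y ∧ (x.1 = y.1 ∨ x.2 = y.2 ∨ x.1 + x.2 = y.1 + y.2)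
  symm := by
    constructor
    rintro x y ⟨hne, h⟩
    refine ⟨hne.symm, ?_⟩
    rcases h with h | h | h
    · exact Or.inl h.symm
    · exact Or.inr (Or.inl h.symm)
    · exact Or.inr (Or.inr h.symm)
  loopless := by constructor; rintro x ⟨hne, -⟩; exact hne rfl

/-- For every odd `n ≥ 1`, the circulant Latin square of order `n` satisfies `χ = n`. -/
theorem stmt_13 (n : ℕ) (hn : 1 ≤ n) (hodd : Odd n) :
    (circGraph n).chromaticNumber = (n : ℕ∞) := by
  haveI : NeZero n := ⟨by omega⟩
  have h2 : IsUnit (2 : ZMod n) := by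
    have hc : Nat.Coprime 2 n := hodd.coprime_two_left
    have := (ZMod.isUnit_iff_coprime 2 n).mpr hc
    simpa using this
  apply le_antisymm
  · -- upper bound: color (r,c) by r - c
    have hcol : (circGraph n).Coloring (ZMod n) := by
      refine SimpleGraph.Coloring.mk (fun x => x.1 - x.2) ?_
      rintro x y ⟨hne, hadj⟩ heq
      change x.1 - x.2 = y.1 - y.2 at heq
      apply hne
      rcases hadj with h | h | h
      · exact Prod.ext h (by linear_combination h - heq)
      · exact Prod.ext (by linear_combination heq + h) h
      · have h1 : (2 : ZMod n) * x.1 = 2 * y.1 := by linear_combination h + heq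
        have hx1 : x.1 = y.1 := h2.mul_left_cancel h1
        exact Prod.ext hx1 (by linear_combination h - hx1)
    have := hcol.colorable.chromaticNumber_le
    simpa [ZMod.card] using this
  · -- lower bound: row 0 is a clique of size n
    have hclique : (circGraph n).IsClique
        ((Finset.univ : Finset (ZMod n)).image (fun c => ((0 : ZMod n), c)) : Set (ZMod n × ZMod n)) := by
      intro x hx y hy hxy
      simp only [Finset.coe_image, Set.mem_image] at hx hy
      obtain ⟨c, -, rfl⟩ := hx
      obtain ⟨c', -, rfl⟩ := hy
      exact ⟨hxy, Or.inl rfl⟩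
    have := hclique.card_le_chromaticNumber
    have hcard : ((Finset.univ : Finset (ZMod n)).image (fun c => ((0 : ZMod n), c))).card = n := by
      rw [Finset.card_image_of_injective _ (fun a b h => (Prod.mk.injEq _ _ _ _).mp h |>.2)]
      simp [ZMod.card]
    rwa [hcard] at this
end

section
/- For every even n ≥ 2, the circulant Latin square of order n satisfies χ(L_{Z_n}) = n + 2. -/
private lemma cast_eq_cases {N a b : ℕ} (hN : 0 < N) (ha : a < 3 * N) (hb : b < 3 * N)
    (h : (a : ZMod N) = (b : ZMod N)) :
    a = b ∨ a = b + N ∨ a = b + 2 * N ∨ b = a + N ∨ b = a + 2 * N := by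
  rw [ZMod.natCast_eq_natCast_iff, Nat.modEq_iff_dvd] at h
  obtain ⟨k, hk⟩ := h
  have hNz : (0 : ℤ) < (N : ℤ) := by exact_mod_cast hN
  have haz : (a : ℤ) < 3 * (N : ℤ) := by exact_mod_cast ha
  have hbz : (b : ℤ) < 3 * (N : ℤ) := by exact_mod_cast hb
  have ha0 : (0 : ℤ) ≤ (a : ℤ) := Int.natCast_nonneg a
  have hb0 : (0 : ℤ) ≤ (b : ℤ) := Int.natCast_nonneg b
  have h1 : (N : ℤ) * k < (N : ℤ) * 3 := by nlinarith
  have h2 : (N : ℤ) * (-3) < (N : ℤ) * k := by nlinarith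
  have hk3 : k < 3 := lt_of_mul_lt_mul_left h1 (le_of_lt hNz)
  have hk3' : -3 < k := lt_of_mul_lt_mul_left h2 (le_of_lt hNz)
  interval_cases k <;> omega

private lemma cast_eq_cases2 {N a b : ℕ} (hN : 0 < N) (ha : a < 2 * N) (hb : b < 2 * N)
    (h : (a : ZMod N) = (b : ZMod N)) :
    a = b ∨ a = b + N ∨ b = a + N := by
  rcases cast_eq_cases hN (by omega) (by omega) h with h' | h' | h' | h' | h' <;> omega

private lemma val_add_cast (n : ℕ) [NeZero n] (x y : ZMod n) :
    ((x.val + y.val : ℕ) : ZMod n) = x + y := by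
  push_cast
  rw [ZMod.natCast_val, ZMod.natCast_val, ZMod.cast_id, ZMod.cast_id]

private lemma circ_colorable (n : ℕ) (hn : 2 ≤ n) (heven : Even n) :
    (circGraph n).Colorable (n + 2) := by
  haveI : NeZero n := ⟨by omega⟩
  obtain ⟨m, hm⟩ := heven
  have C : (circGraph n).Coloring (ZMod (n + 2)) := by
    refine SimpleGraph.Coloring.mk
      (fun x => ((x.1.val + 2 * x.2.val + (if n ≤ 2 * x.2.val then 1 else 0)
        + (if n ≤ x.1.val + x.2.val then 2 else 0) : ℕ) : ZMod (n + 2))) ?_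
    rintro x y ⟨hne, hl⟩ hc
    apply hne
    have ha : x.1.val < n := ZMod.val_lt x.1
    have hb : x.2.val < n := ZMod.val_lt x.2
    have hc1 : y.1.val < n := ZMod.val_lt y.1
    have hd : y.2.val < n := ZMod.val_lt y.2
    have hl' : x.1.val = y.1.val ∨ x.2.val = y.2.val ∨
        (x.1.val + x.2.val = y.1.val + y.2.val ∨
         x.1.val + x.2.val = y.1.val + y.2.val + n ∨
         y.1.val + y.2.val = x.1.val + x.2.val + n) := by
      rcases hl with h | h | h
      · exact Or.inl (congrArg ZMod.val h)
      · exact Or.inr (Or.inl (congrArg ZMod.val h))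
      · refine Or.inr (Or.inr ?_)
        have hcast : ((x.1.val + x.2.val : ℕ) : ZMod n) = ((y.1.val + y.2.val : ℕ) : ZMod n) := by
          rw [val_add_cast n x.1 x.2, val_add_cast n y.1 y.2, h]
        exact cast_eq_cases2 (by omega) (by omega) (by omega) hcast
    have hvals : x.1.val = y.1.val ∧ x.2.val = y.2.val := by
      split_ifs at hc <;>
        rcases cast_eq_cases (by omega) (by omega) (by omega) hc with h' | h' | h' | h' | h' <;>
        rcases hl' with h | h | (h | h | h) <;> constructor <;> omega
    have h1 : x.1 = y.1 := ZMod.val_injective n hvals.1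
    have h2 : x.2 = y.2 := ZMod.val_injective n hvals.2
    exact Prod.ext h1 h2
  have hcard : Fintype.card (ZMod (n + 2)) = n + 2 := ZMod.card _
  exact hcard ▸ C.colorable

private lemma sum_univ_zmod (n : ℕ) [NeZero n] :
    (∑ z : ZMod n, z) = ((∑ i ∈ Finset.range n, i : ℕ) : ZMod n) := by
  rw [Nat.cast_sum]
  refine Finset.sum_nbij' (fun z => z.val) (fun i => (i : ZMod n)) ?_ ?_ ?_ ?_ ?_
  · intro z _; simp [Finset.mem_range, ZMod.val_lt]
  · intro i _; simp
  · intro z _; simp [ZMod.natCast_val, ZMod.cast_id]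
  · intro i hi; simp only [Finset.mem_range] at hi; exact ZMod.val_natCast_of_lt hi
  · intro z _; simp [ZMod.natCast_val, ZMod.cast_id]

private lemma circ_not_colorable (n m : ℕ) (hm : n = m + m) (hn : 2 ≤ n) :
    ¬ (circGraph n).Colorable (n + 1) := by
  haveI : NeZero n := ⟨by omega⟩
  rintro ⟨C⟩
  have hcard : Fintype.card (ZMod n × ZMod n) = n * n := by
    simp [ZMod.card]
  have hlt : Fintype.card (Fin (n + 1)) * (n - 1) < Fintype.card (ZMod n × ZMod n) := by
    rw [hcard, Fintype.card_fin]
    have e : (n + 1) * (n - 1) + 1 = n * n := by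
      obtain ⟨t, rfl⟩ : ∃ t, n = t + 1 := ⟨n - 1, by omega⟩
      simp only [Nat.add_sub_cancel]
      ring
    omega
  obtain ⟨b, hb⟩ := Fintype.exists_lt_card_fiber_of_mul_lt_card C hlt
  set S := Finset.univ.filter (fun x => C x = b) with hS
  have hmemb : ∀ x ∈ S, C x = b := by
    intro x hx; simpa [hS] using hx
  have hnadj : ∀ x ∈ S, ∀ y ∈ S, x ≠ y →
      ¬(x.1 = y.1 ∨ x.2 = y.2 ∨ x.1 + x.2 = y.1 + y.2) := by
    intro x hx y hy hne hline
    exact C.valid (⟨hne, hline⟩ : (circGraph n).Adj x y)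
      (by rw [hmemb x hx, hmemb y hy])
  have hinj1 : ∀ x ∈ S, ∀ y ∈ S, x.1 = y.1 → x = y := by
    intro x hx y hy h
    by_contra hne
    exact hnadj x hx y hy hne (Or.inl h)
  have hinj2 : ∀ x ∈ S, ∀ y ∈ S, x.2 = y.2 → x = y := by
    intro x hx y hy h
    by_contra hne
    exact hnadj x hx y hy hne (Or.inr (Or.inl h))
  have hinj3 : ∀ x ∈ S, ∀ y ∈ S, x.1 + x.2 = y.1 + y.2 → x = y := by
    intro x hx y hy h
    by_contra hne
    exact hnadj x hx y hy hne (Or.inr (Or.inr h))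
  have hSle : S.card ≤ n := by
    have h := Finset.card_le_card_of_injOn (t := (Finset.univ : Finset (ZMod n))) Prod.fst
      (fun a _ => Finset.mem_univ _)
      (fun x hx y hy h => hinj1 x (by simpa using hx) y (by simpa using hy) h)
    simpa [ZMod.card] using h
  have hScard : S.card = n := by omega
  have himage : ∀ f : ZMod n × ZMod n → ZMod n,
      (∀ x ∈ S, ∀ y ∈ S, f x = f y → x = y) → S.image f = Finset.univ := by
    intro f hf
    apply Finset.eq_univ_of_card
    rw [Finset.card_image_of_injOn
      (fun x hx y hy h => hf x (by simpa using hx) y (by simpa using hy) h), hScard, ZMod.card]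
  have hsum : ∀ f : ZMod n × ZMod n → ZMod n,
      (∀ x ∈ S, ∀ y ∈ S, f x = f y → x = y) → (∑ x ∈ S, f x) = ∑ z : ZMod n, z := by
    intro f hf
    rw [← himage f hf, Finset.sum_image (fun x hx y hy h => hf x hx y hy h)]
  have e1 := hsum (fun x => x.1) hinj1
  have e2 := hsum (fun x => x.2) hinj2
  have e3 := hsum (fun x => x.1 + x.2) hinj3
  rw [Finset.sum_add_distrib, e1, e2] at e3
  rw [add_eq_left] at e3
  -- e3 : ∑ z : ZMod n, z = 0
  have hgauss : (∑ i ∈ Finset.range n, i) = m * (n - 1) := by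
    have h2 := Finset.sum_range_id_mul_two n
    have h3 : n * (n - 1) = (m * (n - 1)) * 2 := by
      rw [hm]; ring
    omega
  rw [sum_univ_zmod, hgauss] at e3
  have hcast : ((m * (n - 1) : ℕ) : ZMod n) = -(m : ZMod n) := by
    have h1 : (1 : ℕ) ≤ n := by omega
    push_cast [Nat.cast_sub h1]
    rw [ZMod.natCast_self]
    ring
  rw [hcast, neg_eq_zero, ZMod.natCast_eq_zero_iff] at e3
  have hmle : n ≤ m := Nat.le_of_dvd (by omega) e3
  omega

/-- For every even `n ≥ 2`, the circulant Latin square of order `n` satisfies `χ = n + 2`. -/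
theorem stmt_14 (n : ℕ) (hn : 2 ≤ n) (heven : Even n) :
    (circGraph n).chromaticNumber = ((n + 2 : ℕ) : ℕ∞) := by
  obtain ⟨m, hm⟩ := heven
  refine le_antisymm ((circ_colorable n hn ⟨m, hm⟩).chromaticNumber_le) ?_
  by_contra hlt
  push_neg at hlt
  have hle : (circGraph n).chromaticNumber ≤ ((n + 1 : ℕ) : ℕ∞) := by
    have h2 : ((n + 2 : ℕ) : ℕ∞) = ((n + 1 : ℕ) : ℕ∞) + 1 := by norm_cast
    rw [h2] at hlt
    exact (ENat.lt_add_one_iff (ENat.coe_ne_top _)).mp hlt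
  rw [SimpleGraph.chromaticNumber_le_iff_colorable] at hle
  exact circ_not_colorable n m hm hn hle
end

section
/- Let n ≥ 2 and let M be the Möbius ladder of order 2n. If x and x' are nearly antipodal vertices of M (i.e. x' = x + (n−1) in ZMod (2n)), then the subgraph of M induced on the complement of {x, x'} is bipartite. -/
/-- The Möbius ladder of order `2n`: the graph on `ZMod (2n)` where distinct vertices `x, y`
are adjacent iff `y - x ∈ {1, -1, n}`. -/
lemma keyparity (n a b : ℕ) (hn : 2 ≤ n) (ha : a < 2*n) (hb : b < 2*n)
    (ha0 : a ≠ 0) (ha1 : a ≠ n-1) (hb0 : b ≠ 0) (hb1 : b ≠ n-1)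
    (hab : b = a+1 ∨ a = b+1 ∨ b = a+n ∨ a = b+n) :
    (if a < n then a % 2 else (a - n + 1) % 2) ≠ (if b < n then b % 2 else (b - n + 1) % 2) := by
  split_ifs <;> omega

def mobiusLadder (n : ℕ) : SimpleGraph (ZMod (2 * n)) where
  Adj x y := x ≠ y ∧ (y - x = 1 ∨ y - x = -1 ∨ y - x = (n : ZMod (2 * n)))
  symm := by
    have hn : (n : ZMod (2 * n)) + (n : ZMod (2 * n)) = 0 := by
      have h := ZMod.natCast_self (2 * n)
      push_cast at h
      linear_combination h
    refine ⟨?_⟩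
    rintro x y ⟨hne, h⟩
    refine ⟨hne.symm, ?_⟩
    have hsub : x - y = -(y - x) := by ring
    rcases h with h | h | h
    · exact Or.inr (Or.inl (by rw [hsub, h]))
    · exact Or.inl (by rw [hsub, h, neg_neg])
    · exact Or.inr (Or.inr (by rw [hsub, h, neg_eq_of_add_eq_zero_left hn]))
  loopless := by refine ⟨?_⟩; rintro x ⟨hne, -⟩; exact hne rfl

/-- Deleting a nearly antipodal pair of vertices from a Möbius ladder leaves a bipartite
graph (here: a `2`-colorable induced subgraph). -/
theorem stmt_15 (n : ℕ) (hn : 2 ≤ n) (x x' : ZMod (2 * n))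
    (hx : x' = x + ((n - 1 : ℕ) : ZMod (2 * n))) :
    ((mobiusLadder n).induce ({x, x'}ᶜ : Set (ZMod (2 * n)))).Colorable 2 := by
  haveI : NeZero (2 * n) := ⟨by omega⟩
  haveI : Fact (1 < 2 * n) := ⟨by omega⟩
  -- value extraction
  have hvn : ((n : ℕ) : ZMod (2 * n)).val = n := by
    rw [ZMod.val_natCast, Nat.mod_eq_of_lt (by omega)]
  have hvn1 : ((n - 1 : ℕ) : ZMod (2 * n)).val = n - 1 := by
    rw [ZMod.val_natCast, Nat.mod_eq_of_lt (by omega)]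
  refine ⟨SimpleGraph.Coloring.mk
    (fun v => ⟨if (v.1 - x).val < n then (v.1 - x).val % 2 else ((v.1 - x).val - n + 1) % 2,
      by split_ifs <;> omega⟩) ?_⟩
  rintro ⟨u, hu⟩ ⟨v, hv⟩ ⟨hne, hadj⟩
  simp only [Function.Embedding.coe_subtype] at hadj
  simp only [Set.mem_compl_iff, Set.mem_insert_iff, Set.mem_singleton_iff, not_or] at hu hv
  set a := (u - x).val with hadef
  set b := (v - x).val with hbdef
  have haux : ∀ w : ZMod (2 * n), w ≠ x → w ≠ x' → (w - x).val ≠ 0 ∧ (w - x).val ≠ n - 1 := by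
    intro w h1 h2
    constructor
    · intro h
      apply h1
      have : w - x = 0 := by
        have := ZMod.val_injective (2 * n) (a₁ := w - x) (a₂ := 0)
        apply this; simpa using h
      linear_combination this
    · intro h
      apply h2
      have : w - x = ((n - 1 : ℕ) : ZMod (2 * n)) := by
        apply ZMod.val_injective (2 * n)
        rw [h, hvn1]
      rw [hx]; linear_combination this
  obtain ⟨ha0, ha1⟩ := haux u hu.1 hu.2
  obtain ⟨hb0, hb1⟩ := haux v hv.1 hv.2
  have hal : a < 2 * n := ZMod.val_lt _
  have hbl : b < 2 * n := ZMod.val_lt _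
  have hab : b = a + 1 ∨ a = b + 1 ∨ b = a + n ∨ a = b + n := by
    rcases hadj with h | h | h
    · left
      have hq : v - x = (u - x) + 1 := by linear_combination h
      have : b = (a + 1) % (2 * n) := by
        rw [hbdef, hq, ZMod.val_add, ZMod.val_one]
      rcases lt_or_eq_of_le (show a + 1 ≤ 2 * n by omega) with h' | h'
      · rw [Nat.mod_eq_of_lt h'] at this; omega
      · rw [h', Nat.mod_self] at this; omega
    · right; left
      have hq : u - x = (v - x) + 1 := by linear_combination -h
      have : a = (b + 1) % (2 * n) := by
        rw [hadef, hq, ZMod.val_add, ZMod.val_one]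
      rcases lt_or_eq_of_le (show b + 1 ≤ 2 * n by omega) with h' | h'
      · rw [Nat.mod_eq_of_lt h'] at this; omega
      · rw [h', Nat.mod_self] at this; omega
    · right; right
      have hq : v - x = (u - x) + (n : ZMod (2 * n)) := by linear_combination h
      have hb' : b = (a + n) % (2 * n) := by
        rw [hbdef, hq, ZMod.val_add, hvn]
      rcases lt_or_ge a n with h' | h'
      · left; rw [Nat.mod_eq_of_lt (by omega)] at hb'; omega
      · right
        have : a + n = (a - n) + 1 * (2 * n) := by omega
        rw [this, Nat.add_mul_mod_self_right, Nat.mod_eq_of_lt (by omega)] at hb'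
        omega
  have := keyparity n a b hn hal hbl ha0 ha1 hb0 hb1 hab
  intro hcontra
  exact this (congrArg Fin.val hcontra)
end
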